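/- Let λ ∈ V be a dominant weight, let δ ∈ V* be a dominant coweight (⟨α_i, δ⟩ ≥ 0 for all i), and let u, v ∈ W with v ≤ u. If ⟨λ, uδ⟩ = ⟨λ, vδ⟩, then W_λ u W_δ = W_λ v W_δ, where W_λ := {σ ∈ W : σλ = λ} and W_δ := {σ ∈ W : σδ = δ}. -/

import Mathlib

open scoped Classical

/-- Data of a root system with a fixed choice of simple roots: an ambient
`ℚ`-vector space `V`, a set of roots `Φ` with a distinguished subset `pos` of
positive roots, a coroot functional `coroot β = ⟨·, β^∨⟩` for each root, and
simple roots `α 1, …, α r`. -/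
structure RootData where
  r : ℕ
  V : Type
  [grp : AddCommGroup V]
  [mod : Module ℚ V]
  Φ : Set V
  pos : Set V
  coroot : V → Module.Dual ℚ V
  α : Fin r → V

attribute [instance] RootData.grp RootData.mod

namespace RootData

variable (R : RootData)

/-- The group of linear automorphisms of `V`, in which the Weyl group lives. -/
abbrev Aut : Type := R.V ≃ₗ[ℚ] R.V

/-- The linear map `v ↦ v - ⟨v, β^∨⟩ β`. -/
noncomputable def reflMap (β : R.V) : R.V →ₗ[ℚ] R.V :=
  LinearMap.id - (R.coroot β).smulRight β

/-- The reflection `s_β` associated to a root `β`, as a linear automorphism. -/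
noncomputable def s (β : R.V) : R.Aut :=
  if h : (R.reflMap β).comp (R.reflMap β) = LinearMap.id then
    LinearEquiv.ofLinear (R.reflMap β) (R.reflMap β) h h
  else LinearEquiv.refl ℚ R.V

/-- The simple reflections `s_i := s_{α_i}`. -/
noncomputable def S (i : Fin R.r) : R.Aut := R.s (R.α i)

/-- The Weyl group `W`, generated by the simple reflections. -/
noncomputable def weylGroup : Subgroup R.Aut := Subgroup.closure (Set.range R.S)

/-- The product `s_{i_1} ⋯ s_{i_k}` of a word in the simple reflections. -/
noncomputable def wordProd (l : List (Fin R.r)) : R.Aut := (l.map R.S).prod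

/-- The length function on `W`: least length of a word in the simple
reflections expressing the given element. -/
noncomputable def len (w : R.Aut) : ℕ :=
  sInf {n | ∃ l : List (Fin R.r), l.length = n ∧ R.wordProd l = w}

/-- A word is reduced if its length equals the length of its product. -/
def Reduced (l : List (Fin R.r)) : Prop := R.len (R.wordProd l) = l.length

/-- The Bruhat order on `W`: `u ≤ w` iff some reduced word for `w` has a
subword whose product is `u`. -/
def BruhatLE (u w : R.Aut) : Prop :=
  ∃ l : List (Fin R.r), R.Reduced l ∧ R.wordProd l = w ∧
    ∃ l' : List (Fin R.r), l'.Sublist l ∧ R.wordProd l' = u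

/-- Strict Bruhat order. -/
def BruhatLT (u w : R.Aut) : Prop := R.BruhatLE u w ∧ u ≠ w

/-- One step of the Demazure product: `s_i * w := max {w, s_i w}`. -/
noncomputable def dmulStep (i : Fin R.r) (x : R.Aut) : R.Aut :=
  if R.len x < R.len (R.S i * x) then R.S i * x else x

/-- Demazure product of a word in the simple reflections against `w`:
`s_{i_1} * (s_{i_2} * (⋯ * (s_{i_k} * w)))`. -/
noncomputable def dmulList (l : List (Fin R.r)) (w : R.Aut) : R.Aut :=
  l.foldr R.dmulStep w

/-- The Demazure product `v * w` on the Weyl group, computed by choosing a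
reduced word for `v` (it is independent of this choice). -/
noncomputable def dmul (v w : R.Aut) : R.Aut :=
  if h : ∃ l : List (Fin R.r), R.Reduced l ∧ R.wordProd l = v then
    R.dmulList h.choose w
  else v * w

/-- The parabolic subgroup `W_{P_i}` generated by the simple reflections
`s_j`, `j ≠ i`. -/
noncomputable def WPar (i : Fin R.r) : Subgroup R.Aut :=
  Subgroup.closure (R.S '' {j | j ≠ i})

/-- `W^{P_i}`: the set of minimal-length representatives of cosets of
`W/W_{P_i}`. -/
def minReps (i : Fin R.r) : Set R.Aut :=
  {v | v ∈ R.weylGroup ∧ ∀ p ∈ R.WPar i, R.len v ≤ R.len (v * p)}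

/-- `u` is the minimal-length representative of the coset `w W_{P_i}`. -/
def IsMinRep (i : Fin R.r) (u w : R.Aut) : Prop :=
  u ∈ R.minReps i ∧ u⁻¹ * w ∈ R.WPar i

/-- A weight is dominant if it pairs nonnegatively with every simple coroot. -/
def Dominant (lam : R.V) : Prop := ∀ i : Fin R.r, 0 ≤ R.coroot (R.α i) lam

/-- The dual action of the Weyl group on `V* `: `(u f)(v) = f(u⁻¹ v)`. -/
noncomputable def dualAct (u : R.Aut) (f : Module.Dual ℚ R.V) : Module.Dual ℚ R.V :=
  f.comp (u.symm : R.V →ₗ[ℚ] R.V)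

/-- The Demazure polytope `P_λ^w := conv {uλ : u ∈ W, u ≤ w}`. -/
noncomputable def demPolytope (lam : R.V) (w : R.Aut) : Set R.V :=
  convexHull ℚ {m | ∃ u : R.Aut, u ∈ R.weylGroup ∧ R.BruhatLE u w ∧ m = u lam}

/-- Membership in the weight lattice `X`. -/
def IsWeight (lam : R.V) : Prop := ∀ β ∈ R.Φ, ∃ m : ℤ, R.coroot β lam = (m : ℚ)

/-- The root lattice `Q = ℤΦ`. -/
noncomputable def rootLattice : AddSubgroup R.V := AddSubgroup.closure R.Φ

/-- `w₀` is the longest element of the Weyl group. -/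
def IsLongest (w₀ : R.Aut) : Prop :=
  w₀ ∈ R.weylGroup ∧ ∀ g ∈ R.weylGroup, R.len g ≤ R.len w₀

/-- The positive roots `Φ_{P_i}⁺ = Φ⁺ ∩ span {α_j : j ≠ i}` of the standard
Levi subsystem. -/
def parPos (i : Fin R.r) : Set R.V :=
  {η | η ∈ R.pos ∧ η ∈ Submodule.span ℚ (R.α '' {j | j ≠ i})}

/-- The value `D_i (e^λ)` of the Demazure operator on a basis element of the
group ring `ℤ[X]`. -/
noncomputable def demOnBasis (i : Fin R.r) (lam : R.V) : R.V →₀ ℤ :=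
  if 0 ≤ ⌊R.coroot (R.α i) lam⌋ then
    ∑ k ∈ Finset.range (⌊R.coroot (R.α i) lam⌋.toNat + 1),
      Finsupp.single (lam - (k : ℚ) • R.α i) 1
  else if ⌊R.coroot (R.α i) lam⌋ = -1 then 0
  else - ∑ k ∈ Finset.range ((-⌊R.coroot (R.α i) lam⌋).toNat - 1),
      Finsupp.single (lam + ((k : ℚ) + 1) • R.α i) 1

/-- The Demazure operator `D_i`, as a `ℤ`-linear endomorphism of the group
ring `ℤ[X]` (realized as finitely supported functions `V →₀ ℤ`). -/
noncomputable def demOp (i : Fin R.r) : (R.V →₀ ℤ) →ₗ[ℤ] (R.V →₀ ℤ) :=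
  Finsupp.lsum ℤ fun lam => LinearMap.toSpanSingleton ℤ (R.V →₀ ℤ) (R.demOnBasis i lam)

/-- The Demazure character `D_{i_1} ⋯ D_{i_k} (e^λ)`. -/
noncomputable def demChar (l : List (Fin R.r)) (lam : R.V) : R.V →₀ ℤ :=
  l.foldr (fun i p => R.demOp i p) (Finsupp.single lam 1)

/-- The axioms of a finite crystallographic root system spanning `V`, with
simple roots `α_i` and positive roots `pos`. -/
structure IsRootSystem (R : RootData) : Prop where
  finite : R.Φ.Finite
  span_top : Submodule.span ℚ R.Φ = ⊤
  ne_zero : ∀ β ∈ R.Φ, β ≠ 0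
  coroot_self : ∀ β ∈ R.Φ, R.coroot β β = 2
  crystallographic : ∀ β ∈ R.Φ, ∀ γ ∈ R.Φ, ∃ m : ℤ, R.coroot β γ = (m : ℚ)
  reflection_stable : ∀ β ∈ R.Φ, ∀ γ ∈ R.Φ, γ - R.coroot β γ • β ∈ R.Φ
  simple_mem : ∀ i, R.α i ∈ R.Φ
  indep : LinearIndependent ℚ R.α
  pos_subset : R.pos ⊆ R.Φ
  pos_or_neg : ∀ β ∈ R.Φ, (β ∈ R.pos ∧ -β ∉ R.pos) ∨ (β ∉ R.pos ∧ -β ∈ R.pos)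
  simple_pos : ∀ i, R.α i ∈ R.pos
  pos_nonneg_comb : ∀ β ∈ R.pos, ∃ c : Fin R.r → ℚ, (∀ i, 0 ≤ c i) ∧ β = ∑ i, c i • R.α i

set_option linter.dupNamespace false

variable {R : RootData}

lemma mul_apply (f g : R.Aut) (x : R.V) : (f * g) x = f (g x) := rfl
lemma one_apply (x : R.V) : (1 : R.Aut) x = x := rfl
lemma inv_eq_symm (f : R.Aut) : f⁻¹ = f.symm := rfl

lemma reflMap_apply (β x : R.V) : R.reflMap β x = x - R.coroot β x • β := by
  simp [reflMap, LinearMap.sub_apply]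

lemma reflMap_invol (hR : R.IsRootSystem) {β : R.V} (hβ : β ∈ R.Φ) (x : R.V) :
    R.reflMap β (R.reflMap β x) = x := by
  rw [reflMap_apply, reflMap_apply, map_sub, map_smul, hR.coroot_self β hβ, smul_eq_mul]
  module

lemma reflMap_comp (hR : R.IsRootSystem) {β : R.V} (hβ : β ∈ R.Φ) :
    (R.reflMap β).comp (R.reflMap β) = LinearMap.id := by
  ext x; exact reflMap_invol hR hβ x

lemma s_apply (hR : R.IsRootSystem) {β : R.V} (hβ : β ∈ R.Φ) (x : R.V) :
    R.s β x = x - R.coroot β x • β := by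
  rw [RootData.s, dif_pos (reflMap_comp hR hβ)]
  exact reflMap_apply β x

lemma s_s (hR : R.IsRootSystem) {β : R.V} (hβ : β ∈ R.Φ) (x : R.V) :
    R.s β (R.s β x) = x := by
  rw [RootData.s, dif_pos (reflMap_comp hR hβ)]
  exact reflMap_invol hR hβ x

lemma s_symm (hR : R.IsRootSystem) {β : R.V} (hβ : β ∈ R.Φ) :
    (R.s β).symm = R.s β := by
  ext x
  rw [LinearEquiv.symm_apply_eq]
  exact (s_s hR hβ x).symm

lemma s_inv (hR : R.IsRootSystem) {β : R.V} (hβ : β ∈ R.Φ) :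
    (R.s β)⁻¹ = R.s β := s_symm hR hβ

lemma s_mul_s (hR : R.IsRootSystem) {β : R.V} (hβ : β ∈ R.Φ) :
    R.s β * R.s β = 1 := by
  have := inv_mul_cancel (R.s β)
  rwa [s_inv hR hβ] at this

lemma s_apply_self (hR : R.IsRootSystem) {β : R.V} (hβ : β ∈ R.Φ) :
    R.s β β = -β := by
  rw [s_apply hR hβ, hR.coroot_self β hβ, two_smul]; abel
/-- The subgroup of automorphisms preserving the root set. -/
noncomputable def Gsub (R : RootData) : Subgroup R.Aut where
  carrier := {g | ∀ β ∈ R.Φ, g β ∈ R.Φ ∧ g⁻¹ β ∈ R.Φ}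
  one_mem' := by intro β hβ; exact ⟨hβ, by simpa using hβ⟩
  mul_mem' := by
    intro g h hg hh β hβ
    constructor
    · rw [mul_apply]; exact (hg _ (hh β hβ).1).1
    · rw [mul_inv_rev, mul_apply]
      exact (hh _ (hg β hβ).2).2
  inv_mem' := by
    intro g hg β hβ
    refine ⟨(hg β hβ).2, ?_⟩
    rw [inv_inv]; exact (hg β hβ).1

lemma s_mem_Gsub (hR : R.IsRootSystem) {β : R.V} (hβ : β ∈ R.Φ) : R.s β ∈ R.Gsub := by
  intro γ hγ
  have h1 : R.s β γ ∈ R.Φ := by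
    rw [s_apply hR hβ]; exact hR.reflection_stable β hβ γ hγ
  exact ⟨h1, by rw [s_inv hR hβ]; exact h1⟩

lemma S_mem_Gsub (hR : R.IsRootSystem) (i : Fin R.r) : R.S i ∈ R.Gsub :=
  s_mem_Gsub hR (hR.simple_mem i)

lemma S_mem_weylGroup (i : Fin R.r) : R.S i ∈ R.weylGroup :=
  Subgroup.subset_closure ⟨i, rfl⟩

lemma weylGroup_le_Gsub (hR : R.IsRootSystem) : R.weylGroup ≤ R.Gsub := by
  rw [weylGroup, Subgroup.closure_le]
  rintro g ⟨i, rfl⟩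
  exact S_mem_Gsub hR i

lemma mem_Phi_of_Gsub (hR : R.IsRootSystem) {w : R.Aut} (hw : w ∈ R.Gsub) {β : R.V}
    (hβ : β ∈ R.Φ) : w β ∈ R.Φ := (hw β hβ).1

lemma wordProd_nil : R.wordProd [] = 1 := rfl

lemma wordProd_cons (i : Fin R.r) (l : List (Fin R.r)) :
    R.wordProd (i :: l) = R.S i * R.wordProd l := by
  simp [wordProd]

lemma wordProd_append (l m : List (Fin R.r)) :
    R.wordProd (l ++ m) = R.wordProd l * R.wordProd m := by
  simp [wordProd]

lemma wordProd_concat (l : List (Fin R.r)) (j : Fin R.r) :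
    R.wordProd (l ++ [j]) = R.wordProd l * R.S j := by
  simp [wordProd]

lemma wordProd_mem (l : List (Fin R.r)) : R.wordProd l ∈ R.weylGroup := by
  induction l with
  | nil => exact one_mem _
  | cons i t ih => rw [wordProd_cons]; exact mul_mem (S_mem_weylGroup i) ih

lemma wordProd_reverse (hR : R.IsRootSystem) (l : List (Fin R.r)) :
    R.wordProd l.reverse = (R.wordProd l)⁻¹ := by
  induction l with
  | nil => simp [wordProd]
  | cons i t ih =>
      rw [List.reverse_cons, wordProd_concat, wordProd_cons, ih, mul_inv_rev]
      congr 1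
      exact (s_inv hR (hR.simple_mem i)).symm

lemma exists_word (hR : R.IsRootSystem) {w : R.Aut} (hw : w ∈ R.weylGroup) :
    ∃ l, R.wordProd l = w := by
  induction hw using Subgroup.closure_induction with
  | mem g hg => obtain ⟨i, rfl⟩ := hg; exact ⟨[i], by simp [wordProd]⟩
  | one => exact ⟨[], rfl⟩
  | mul g h _ _ hg hh =>
      obtain ⟨l, rfl⟩ := hg; obtain ⟨m, rfl⟩ := hh
      exact ⟨l ++ m, wordProd_append l m⟩
  | inv g _ hg =>
      obtain ⟨l, rfl⟩ := hg
      exact ⟨l.reverse, wordProd_reverse hR l⟩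

lemma len_le (l : List (Fin R.r)) : R.len (R.wordProd l) ≤ l.length :=
  Nat.sInf_le ⟨l, rfl, rfl⟩

lemma exists_reduced (hR : R.IsRootSystem) {w : R.Aut} (hw : w ∈ R.weylGroup) :
    ∃ l, R.Reduced l ∧ R.wordProd l = w := by
  obtain ⟨l, rfl⟩ := exists_word hR hw
  have hne : {n | ∃ l', (l' : List (Fin R.r)).length = n ∧ R.wordProd l' = R.wordProd l}.Nonempty :=
    ⟨l.length, l, rfl, rfl⟩
  obtain ⟨m, hm, hprod⟩ := Nat.sInf_mem hne
  exact ⟨m, by rw [Reduced, hprod, len, hm], hprod⟩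
lemma span_alpha (hR : R.IsRootSystem) : ⊤ ≤ Submodule.span ℚ (Set.range R.α) := by
  rw [← hR.span_top]
  refine Submodule.span_le.2 ?_
  intro β hβ
  have hcomb : ∀ γ ∈ R.pos, γ ∈ Submodule.span ℚ (Set.range R.α) := by
    intro γ hγ
    obtain ⟨c, _, hγeq⟩ := hR.pos_nonneg_comb γ hγ
    rw [hγeq]
    exact Submodule.sum_mem _ fun i _ =>
      Submodule.smul_mem _ _ (Submodule.subset_span ⟨i, rfl⟩)
  rcases hR.pos_or_neg β hβ with ⟨h, _⟩ | ⟨_, h⟩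
  · exact hcomb β h
  · have := hcomb _ h
    simpa using Submodule.neg_mem _ this

/-- A basis of `V` made of the simple roots. -/
noncomputable def bas (hR : R.IsRootSystem) : Module.Basis (Fin R.r) ℚ R.V :=
  Module.Basis.mk hR.indep (span_alpha hR)

lemma bas_apply (hR : R.IsRootSystem) (i : Fin R.r) : bas hR i = R.α i := Module.Basis.mk_apply _ _ _

lemma repr_comb (hR : R.IsRootSystem) (c : Fin R.r → ℚ) (j : Fin R.r) :
    (bas hR).repr (∑ i, c i • R.α i) j = c j := by
  have : ∀ i, c i • R.α i = c i • bas hR i := by intro i; rw [bas_apply]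
  simp only [this]
  rw [map_sum]
  simp [Finsupp.single_apply]

lemma aut_ext (hR : R.IsRootSystem) {g h : R.Aut} (he : ∀ β ∈ R.Φ, g β = h β) : g = h := by
  apply LinearEquiv.toLinearMap_injective
  exact LinearMap.ext_on hR.span_top he

/-- Finiteness of the Φ-preserving group. -/
lemma finite_Gsub (hR : R.IsRootSystem) : Finite R.Gsub := by
  have hΦ : Finite R.Φ := hR.finite
  have : Finite (R.Φ → R.Φ) := by infer_instance
  let f : R.Gsub → (R.Φ → R.Φ) := fun g β => ⟨g.1 β.1, (g.2 β.1 β.2).1⟩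
  refine Finite.of_injective f ?_
  intro g h hgh
  apply Subtype.ext
  apply aut_ext hR
  intro β hβ
  exact congrArg Subtype.val (congrFun hgh ⟨β, hβ⟩)

noncomputable def B0 (hR : R.IsRootSystem) (x y : R.V) : ℚ :=
  ∑ i, (bas hR).repr x i * (bas hR).repr y i
lemma B0_symm (hR : R.IsRootSystem) (x y : R.V) : B0 hR x y = B0 hR y x := by
  unfold B0; exact Finset.sum_congr rfl fun i _ => mul_comm _ _

lemma B0_add_left (hR : R.IsRootSystem) (x x' y : R.V) :
    B0 hR (x + x') y = B0 hR x y + B0 hR x' y := by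
  unfold B0
  rw [← Finset.sum_add_distrib]
  exact Finset.sum_congr rfl fun i _ => by rw [map_add]; simp [add_mul]

lemma B0_smul_left (hR : R.IsRootSystem) (c : ℚ) (x y : R.V) :
    B0 hR (c • x) y = c * B0 hR x y := by
  unfold B0
  rw [Finset.mul_sum]
  exact Finset.sum_congr rfl fun i _ => by rw [map_smul]; simp [mul_assoc]

lemma B0_nonneg (hR : R.IsRootSystem) (x : R.V) : 0 ≤ B0 hR x x :=
  Finset.sum_nonneg fun i _ => mul_self_nonneg _

lemma B0_eq_zero (hR : R.IsRootSystem) {x : R.V} (h : B0 hR x x = 0) : x = 0 := by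
  have : ∀ i ∈ Finset.univ, (bas hR).repr x i * (bas hR).repr x i = 0 := by
    rw [← Finset.sum_eq_zero_iff_of_nonneg fun i _ => mul_self_nonneg ((bas hR).repr x i)]
    exact h
  have hz : (bas hR).repr x = 0 := by
    ext i
    have := this i (Finset.mem_univ i)
    simpa [mul_self_eq_zero] using this
  have := congrArg (bas hR).repr.symm hz
  simpa using this

noncomputable def Bf (hR : R.IsRootSystem) (x y : R.V) : ℚ :=
  letI : Fintype R.Gsub := @Fintype.ofFinite _ (finite_Gsub hR)
  ∑ g : R.Gsub, B0 hR (g.1 x) (g.1 y)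

lemma Bf_symm (hR : R.IsRootSystem) (x y : R.V) : Bf hR x y = Bf hR y x := by
  unfold Bf
  exact Finset.sum_congr rfl fun g _ => B0_symm hR _ _

lemma Bf_add_left (hR : R.IsRootSystem) (x x' y : R.V) :
    Bf hR (x + x') y = Bf hR x y + Bf hR x' y := by
  unfold Bf
  rw [← Finset.sum_add_distrib]
  exact Finset.sum_congr rfl fun g _ => by rw [map_add, B0_add_left]

lemma Bf_smul_left (hR : R.IsRootSystem) (c : ℚ) (x y : R.V) :
    Bf hR (c • x) y = c * Bf hR x y := by
  unfold Bf
  rw [Finset.mul_sum]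
  exact Finset.sum_congr rfl fun g _ => by rw [map_smul, B0_smul_left]

lemma Bf_smul_right (hR : R.IsRootSystem) (c : ℚ) (x y : R.V) :
    Bf hR x (c • y) = c * Bf hR x y := by
  rw [Bf_symm, Bf_smul_left, Bf_symm]

lemma Bf_add_right (hR : R.IsRootSystem) (x y y' : R.V) :
    Bf hR x (y + y') = Bf hR x y + Bf hR x y' := by
  rw [Bf_symm, Bf_add_left, Bf_symm hR y x, Bf_symm hR y' x]

lemma Bf_neg_right (hR : R.IsRootSystem) (x y : R.V) : Bf hR x (-y) = - Bf hR x y := by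
  have := Bf_smul_right hR (-1) x y
  simpa using this

lemma Bf_sub_left (hR : R.IsRootSystem) (x x' y : R.V) :
    Bf hR (x - x') y = Bf hR x y - Bf hR x' y := by
  rw [Bf_symm, sub_eq_add_neg, Bf_add_right, Bf_neg_right, Bf_symm hR y x, Bf_symm hR y x',
    sub_eq_add_neg]

lemma Bf_invariant (hR : R.IsRootSystem) {w : R.Aut} (hw : w ∈ R.Gsub) (x y : R.V) :
    Bf hR (w x) (w y) = Bf hR x y := by
  unfold Bf
  letI : Fintype R.Gsub := @Fintype.ofFinite _ (finite_Gsub hR)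
  exact Fintype.sum_bijective (fun g : R.Gsub => g * ⟨w, hw⟩)
    (Group.mulRight_bijective _) _ _ (fun g => by simp [mul_apply])

lemma Bf_nonneg (hR : R.IsRootSystem) (x : R.V) : 0 ≤ Bf hR x x := by
  unfold Bf
  exact Finset.sum_nonneg fun g _ => B0_nonneg hR _

lemma Bf_zero (hR : R.IsRootSystem) {x : R.V} (h : Bf hR x x = 0) : x = 0 := by
  unfold Bf at h
  letI : Fintype R.Gsub := @Fintype.ofFinite _ (finite_Gsub hR)
  have := (Finset.sum_eq_zero_iff_of_nonneg fun g _ => B0_nonneg hR _).1 h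
    ⟨1, one_mem _⟩ (Finset.mem_univ _)
  exact B0_eq_zero hR (by simpa [one_apply] using this)

lemma Bf_pos (hR : R.IsRootSystem) {x : R.V} (hx : x ≠ 0) : 0 < Bf hR x x :=
  lt_of_le_of_ne (Bf_nonneg hR x) (fun h => hx (Bf_zero hR h.symm))

/-- The key identity `⟨x, γ^∨⟩ B(γ,γ) = 2 B(x,γ)`. -/
lemma coroot_Bf (hR : R.IsRootSystem) {γ : R.V} (hγ : γ ∈ R.Φ) (x : R.V) :
    R.coroot γ x * Bf hR γ γ = 2 * Bf hR x γ := by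
  have hinv := Bf_invariant hR (s_mem_Gsub hR hγ) x γ
  rw [s_apply_self hR hγ, s_apply hR hγ, Bf_neg_right, Bf_sub_left, Bf_smul_left] at hinv
  linarith [hinv]

lemma coroot_conj (hR : R.IsRootSystem) {w : R.Aut} (hw : w ∈ R.Gsub) {γ : R.V}
    (hγ : γ ∈ R.Φ) (x : R.V) :
    R.coroot (w γ) x = R.coroot γ (w⁻¹ x) := by
  have hwγ : w γ ∈ R.Φ := (hw γ hγ).1
  have h1 := coroot_Bf hR hwγ x
  have h2 := coroot_Bf hR hγ (w⁻¹ x)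
  have e1 : Bf hR (w γ) (w γ) = Bf hR γ γ := Bf_invariant hR hw γ γ
  have e2 : Bf hR x (w γ) = Bf hR (w⁻¹ x) γ := by
    have := Bf_invariant hR hw (w⁻¹ x) γ
    rw [show w (w⁻¹ x) = x from by rw [inv_eq_symm]; exact w.apply_symm_apply x] at this
    exact this
  have hpos : 0 < Bf hR γ γ := Bf_pos hR (hR.ne_zero γ hγ)
  rw [e1, e2, ← h2] at h1
  exact mul_right_cancel₀ (ne_of_gt hpos) h1

lemma s_conj (hR : R.IsRootSystem) {w : R.Aut} (hw : w ∈ R.Gsub) {γ : R.V} (hγ : γ ∈ R.Φ) :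
    R.s (w γ) = w * R.s γ * w⁻¹ := by
  have hwγ : w γ ∈ R.Φ := (hw γ hγ).1
  apply aut_ext hR
  intro x _
  rw [s_apply hR hwγ, mul_apply, mul_apply, s_apply hR hγ, map_sub, map_smul,
    coroot_conj hR hw hγ]
  rw [show w (w⁻¹ x) = x from by rw [inv_eq_symm]; exact w.apply_symm_apply x]

lemma s_smul (hR : R.IsRootSystem) {c : ℚ} {i : Fin R.r} (hc : c ≠ 0) {γ : R.V}
    (hγ : γ ∈ R.Φ) (hγc : γ = c • R.α i) : R.s γ = R.S i := by
  have hαi := hR.simple_mem i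
  apply aut_ext hR
  intro x _
  rw [RootData.S, s_apply hR hγ, s_apply hR hαi]
  have h1 := coroot_Bf hR hγ x
  have h2 := coroot_Bf hR hαi x
  have hb1 : Bf hR γ γ = c * (c * Bf hR (R.α i) (R.α i)) := by
    rw [hγc, Bf_smul_left, Bf_smul_right]
  have hb2 : Bf hR x γ = c * Bf hR x (R.α i) := by rw [hγc, Bf_smul_right]
  have hpos : 0 < Bf hR (R.α i) (R.α i) := Bf_pos hR (hR.ne_zero _ hαi)
  have key : R.coroot γ x * c = R.coroot (R.α i) x := by
    have h3 : (R.coroot γ x * c - R.coroot (R.α i) x) * (Bf hR (R.α i) (R.α i) * c) = 0 := by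
      rw [hb1, hb2] at h1
      linear_combination h1 - c * h2
    rcases mul_eq_zero.1 h3 with h | h
    · linarith [h]
    · exact absurd h (mul_ne_zero (ne_of_gt hpos) hc)
  set q := R.coroot γ x with hq
  rw [hγc, smul_smul, key]
lemma neg_mem_pos (hR : R.IsRootSystem) {γ : R.V} (hγ : γ ∈ R.Φ) (h : γ ∉ R.pos) :
    -γ ∈ R.pos := by
  rcases hR.pos_or_neg γ hγ with ⟨h1, _⟩ | ⟨_, h2⟩
  · exact absurd h1 h
  · exact h2

lemma not_neg_mem_pos (hR : R.IsRootSystem) {γ : R.V} (hγ : γ ∈ R.Φ) (h : γ ∈ R.pos) :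
    -γ ∉ R.pos := by
  rcases hR.pos_or_neg γ hγ with ⟨_, h1⟩ | ⟨h2, _⟩
  · exact h1
  · exact absurd h h2

lemma pos_mem_Phi (hR : R.IsRootSystem) {γ : R.V} (hγ : γ ∈ R.pos) : γ ∈ R.Φ :=
  hR.pos_subset hγ

lemma delta_nonneg (hR : R.IsRootSystem) {δ : Module.Dual ℚ R.V}
    (hδ : ∀ i : Fin R.r, 0 ≤ δ (R.α i)) {γ : R.V} (hγ : γ ∈ R.pos) : 0 ≤ δ γ := by
  obtain ⟨c, hc, hγeq⟩ := hR.pos_nonneg_comb γ hγ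
  rw [hγeq, map_sum]
  exact Finset.sum_nonneg fun i _ => by
    rw [map_smul, smul_eq_mul]; exact mul_nonneg (hc i) (hδ i)

lemma Bf_sum_right (hR : R.IsRootSystem) (x : R.V) (c : Fin R.r → ℚ) (f : Fin R.r → R.V) :
    Bf hR x (∑ i, c i • f i) = ∑ i, c i * Bf hR x (f i) := by
  classical
  induction (Finset.univ : Finset (Fin R.r)) using Finset.cons_induction with
  | empty =>
      simp only [Finset.sum_empty]
      have := Bf_smul_right hR 0 x 0
      simpa using this
  | cons a s ha ih =>
      rw [Finset.sum_cons, Finset.sum_cons, Bf_add_right, Bf_smul_right, ih]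

lemma Bf_lam_simple_nonneg (hR : R.IsRootSystem) {lam : R.V} (hdom : R.Dominant lam)
    (i : Fin R.r) : 0 ≤ Bf hR lam (R.α i) := by
  have h := coroot_Bf hR (hR.simple_mem i) lam
  have hpos : 0 < Bf hR (R.α i) (R.α i) := Bf_pos hR (hR.ne_zero _ (hR.simple_mem i))
  have hd := hdom i
  nlinarith [h, hpos, hd]

lemma coroot_pos_nonneg (hR : R.IsRootSystem) {lam : R.V} (hdom : R.Dominant lam)
    {γ : R.V} (hγ : γ ∈ R.pos) : 0 ≤ R.coroot γ lam := by
  have hγΦ := pos_mem_Phi hR hγ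
  obtain ⟨c, hc, hγeq⟩ := hR.pos_nonneg_comb γ hγ
  have h := coroot_Bf hR hγΦ lam
  have hBlg : 0 ≤ Bf hR lam γ := by
    rw [hγeq, Bf_sum_right]
    exact Finset.sum_nonneg fun i _ => mul_nonneg (hc i) (Bf_lam_simple_nonneg hR hdom i)
  have hpos : 0 < Bf hR γ γ := Bf_pos hR (hR.ne_zero _ hγΦ)
  nlinarith [h, hBlg, hpos]

/-- The key dichotomy: a simple reflection either keeps a positive root positive,
or the root is proportional to the simple root and gives the same reflection. -/
lemma key_dichotomy (hR : R.IsRootSystem) (i : Fin R.r) {γ : R.V} (hγ : γ ∈ R.pos) :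
    R.S i γ ∈ R.pos ∨ R.s γ = R.S i := by
  have hγΦ := pos_mem_Phi hR hγ
  by_cases hprop : ∃ c : ℚ, γ = c • R.α i
  · obtain ⟨c, hc⟩ := hprop
    have hc0 : c ≠ 0 := by
      rintro rfl
      exact hR.ne_zero γ hγΦ (by simpa using hc)
    exact Or.inr (s_smul hR hc0 hγΦ hc)
  · left
    obtain ⟨c, hcnn, hγeq⟩ := hR.pos_nonneg_comb γ hγ
    -- some coefficient c k, k ≠ i, is nonzero
    have hex : ∃ k, k ≠ i ∧ c k ≠ 0 := by
      by_contra hno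
      push_neg at hno
      apply hprop
      refine ⟨c i, ?_⟩
      rw [hγeq]
      rw [Finset.sum_eq_single i (fun k _ hk => by rw [hno k hk, zero_smul])
        (fun h => absurd (Finset.mem_univ i) h)]
    obtain ⟨k, hki, hck⟩ := hex
    -- S i γ ∈ Φ
    have hSiγ : R.S i γ ∈ R.Φ := mem_Phi_of_Gsub hR (S_mem_Gsub hR i) hγΦ
    by_contra hneg
    have hmneg : -(R.S i γ) ∈ R.pos := neg_mem_pos hR hSiγ hneg
    obtain ⟨d, hdnn, hdeq⟩ := hR.pos_nonneg_comb _ hmneg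
    -- compute the k-th coordinate
    have hrepr1 : (bas hR).repr γ k = c k := by rw [hγeq]; exact repr_comb hR c k
    have hrepr2 : (bas hR).repr (-(R.S i γ)) k = d k := by rw [hdeq]; exact repr_comb hR d k
    have hSiγeq : R.S i γ = γ - R.coroot (R.α i) γ • R.α i := s_apply hR (hR.simple_mem i) γ
    have hrepr3 : (bas hR).repr (R.S i γ) k = c k := by
      rw [hSiγeq, map_sub, map_smul]
      have : (bas hR).repr (R.α i) k = 0 := by
        rw [← bas_apply hR i, Module.Basis.repr_self]
        simp [Finsupp.single_apply, Ne.symm hki]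
      simp [this, hrepr1]
    rw [map_neg] at hrepr2
    have : -(c k) = d k := by rw [← hrepr2, ← hrepr3]; simp
    have h1 : 0 ≤ c k := hcnn k
    have h2 : 0 ≤ d k := hdnn k
    apply hck
    linarith [this]
/-- Right-handed strong exchange: if `w β < 0` for a positive root `β`, one can
delete a letter from any word for `w` to obtain a word for `w s_β`. -/
lemma se_right (hR : R.IsRootSystem) {β : R.V} (hβ : β ∈ R.pos) :
    ∀ m : List (Fin R.r), R.wordProd m β ∉ R.pos →
    ∃ m', m'.Sublist m ∧ m'.length + 1 = m.length ∧ R.wordProd m' = R.wordProd m * R.s β := by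
  have hβΦ := pos_mem_Phi hR hβ
  intro m
  induction m with
  | nil => intro h; exact absurd (by simpa [wordProd_nil, one_apply] using hβ) h
  | cons i rest ih =>
      intro h
      rw [wordProd_cons, mul_apply] at h
      by_cases h1 : R.wordProd rest β ∈ R.pos
      · -- the reflection is conjugate to S i
        rcases key_dichotomy hR i h1 with hpos | heq
        · exact absurd hpos h
        · have hw' : R.wordProd rest ∈ R.Gsub :=
            weylGroup_le_Gsub hR (wordProd_mem rest)
          have hconj : R.s (R.wordProd rest β) = R.wordProd rest * R.s β * (R.wordProd rest)⁻¹ :=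
            s_conj hR hw' hβΦ
          refine ⟨rest, List.sublist_cons_self i rest, by simp, ?_⟩
          rw [wordProd_cons, ← heq, hconj]
          group
          rw [mul_assoc, s_mul_s hR hβΦ, mul_one]
      · obtain ⟨m', hsub, hlen, hprod⟩ := ih h1
        refine ⟨i :: m', List.cons_sublist_cons.2 hsub, by simp [← hlen], ?_⟩
        rw [wordProd_cons, wordProd_cons, hprod, mul_assoc]

lemma reduced_concat_reduced (hR : R.IsRootSystem) {t : List (Fin R.r)} {j : Fin R.r}
    (h : R.Reduced (t ++ [j])) : R.Reduced t := by
  rw [Reduced] at h ⊢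
  have h1 : R.len (R.wordProd t) ≤ t.length := len_le t
  rcases lt_or_eq_of_le h1 with hlt | heq
  · exfalso
    obtain ⟨m, hm, hprod⟩ := exists_reduced hR (wordProd_mem t)
    have hmlen : m.length = R.len (R.wordProd t) := by rw [Reduced] at hm; rw [← hm, hprod]
    have : R.wordProd (m ++ [j]) = R.wordProd (t ++ [j]) := by
      rw [wordProd_concat, wordProd_concat, hprod]
    have hle2 : R.len (R.wordProd (t ++ [j])) ≤ m.length + 1 := by
      rw [← this]
      simpa using len_le (m ++ [j])
    rw [h] at hle2
    simp only [List.length_append, List.length_singleton] at hle2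
    omega
  · exact heq

lemma ascent_of_reduced (hR : R.IsRootSystem) {t : List (Fin R.r)} {j : Fin R.r}
    (h : R.Reduced (t ++ [j])) : R.wordProd t (R.α j) ∈ R.pos := by
  by_contra hneg
  obtain ⟨m', hsub, hlen, hprod⟩ := se_right hR (hR.simple_pos j) t hneg
  have : R.wordProd m' = R.wordProd (t ++ [j]) := by
    rw [hprod, wordProd_concat]; rfl
  have hle : R.len (R.wordProd (t ++ [j])) ≤ m'.length := by rw [← this]; exact len_le m'
  rw [Reduced] at h
  rw [h] at hle
  simp only [List.length_append, List.length_singleton] at hle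
  omega
end RootData

/-- Chains of positive reflection steps. -/
inductive Chain (R : RootData) : R.Aut → R.Aut → Prop
  | refl (x : R.Aut) : Chain R x x
  | cons {x z : R.Aut} (β : R.V) (hβ : β ∈ R.pos) (hxβ : x β ∈ R.pos)
      (hW : R.s β ∈ R.weylGroup) (h : Chain R (x * R.s β) z) : Chain R x z

lemma Chain.trans' {R : RootData} {x y z : R.Aut} (h1 : Chain R x y) (h2 : Chain R y z) :
    Chain R x z := by
  induction h1 with
  | refl => exact h2
  | cons β hβ hxβ hW h ih => exact Chain.cons β hβ hxβ hW (ih h2)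

lemma Chain.snoc {R : RootData} {x y : R.Aut} (h : Chain R x y) (β : R.V) (hβ : β ∈ R.pos)
    (hyβ : y β ∈ R.pos) (hW : R.s β ∈ R.weylGroup) : Chain R x (y * R.s β) :=
  h.trans' (Chain.cons β hβ hyβ hW (Chain.refl _))

namespace RootData

variable {R : RootData}

lemma S_sq (hR : R.IsRootSystem) (j : Fin R.r) : R.S j * R.S j = 1 :=
  s_mul_s hR (hR.simple_mem j)

lemma S_inv (hR : R.IsRootSystem) (j : Fin R.r) : (R.S j)⁻¹ = R.S j :=
  s_inv hR (hR.simple_mem j)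

lemma S_mem_weyl' (j : Fin R.r) : R.s (R.α j) ∈ R.weylGroup := S_mem_weylGroup j

/-- Conjugating a positive chain by a simple reflection ending in an ascent. -/
lemma chain_mul_S (hR : R.IsRootSystem) {x z : R.Aut} (h : Chain R x z) (j : Fin R.r)
    (hx : x ∈ R.Gsub) (hz : z (R.α j) ∈ R.pos) : Chain R (x * R.S j) (z * R.S j) := by
  induction h with
  | refl x => exact Chain.refl _
  | cons β hβ hxβ hW h ih =>
      rename_i x z'
      have hβΦ := pos_mem_Phi hR hβ
      have hxs : x * R.s β ∈ R.Gsub := mul_mem hx (weylGroup_le_Gsub hR hW)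
      rcases key_dichotomy hR j hβ with hSjβ | heqS
      · -- S j β positive
        have hγ'Φ : R.S j β ∈ R.Φ := pos_mem_Phi hR hSjβ
        have hconj : R.s (R.S j β) = R.S j * R.s β * (R.S j)⁻¹ :=
          s_conj hR (S_mem_Gsub hR j) hβΦ
        have hidA : x * R.S j * R.s (R.S j β) = x * R.s β * R.S j := by
          rw [hconj, S_inv hR j]
          have : x * R.S j * (R.S j * R.s β * R.S j) = x * (R.S j * R.S j) * R.s β * R.S j := by
            group
          rw [this, S_sq hR j, mul_one]
        have hcond : (x * R.S j) (R.S j β) ∈ R.pos := by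
          rw [mul_apply]
          have : R.S j (R.S j β) = β := s_s hR (hR.simple_mem j) β
          rw [this]; exact hxβ
        have hWγ' : R.s (R.S j β) ∈ R.weylGroup := by
          rw [hconj, S_inv hR j]
          exact mul_mem (mul_mem (S_mem_weylGroup j) hW) (S_mem_weylGroup j)
        by_cases hy : (x * R.s β) (R.α j) ∈ R.pos
        · -- use the IH
          have := ih hxs hz
          refine Chain.cons (R.S j β) hSjβ hcond hWγ' ?_
          rw [hidA]
          exact this
        · -- go down then follow the old chain
          have hyΦ : (x * R.s β) (R.α j) ∈ R.Φ :=
            mem_Phi_of_Gsub hR hxs (hR.simple_mem j)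
          have hneg : -((x * R.s β) (R.α j)) ∈ R.pos := neg_mem_pos hR hyΦ hy
          refine Chain.cons (R.S j β) hSjβ hcond hWγ' ?_
          rw [hidA]
          refine Chain.cons (R.α j) (hR.simple_pos j) ?_ (S_mem_weyl' j) ?_
          · rw [mul_apply]
            have : R.S j (R.α j) = -(R.α j) := s_apply_self hR (hR.simple_mem j)
            rw [this, map_neg]
            exact hneg
          · have hid2 : x * R.s β * R.S j * R.s (R.α j) = x * R.s β := by
              show x * R.s β * R.S j * R.S j = x * R.s β
              have h3 : x * R.s β * R.S j * R.S j = x * R.s β * (R.S j * R.S j) := by group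
              rw [h3, S_sq hR j, mul_one]
            rw [hid2]
            exact h.snoc (R.α j) (hR.simple_pos j) hz (S_mem_weyl' j)
      · -- s β = S j
        have : x * R.S j = x * R.s β := by rw [heqS]
        rw [this]
        exact h.snoc (R.α j) (hR.simple_pos j) hz (S_mem_weyl' j)

/-- Theorem: a subword of a reduced word is connected to it by a positive chain. -/
lemma chain_of_sublist (hR : R.IsRootSystem) :
    ∀ l : List (Fin R.r), R.Reduced l → ∀ l', l'.Sublist l →
      Chain R (R.wordProd l') (R.wordProd l) := by
  intro l
  induction l using List.reverseRecOn with
  | nil =>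
      intro _ l' hl'
      rw [List.sublist_nil.1 hl']
      exact Chain.refl _
  | append_singleton t j ih =>
      intro hred l' hl'
      have hredt := reduced_concat_reduced hR hred
      have hasc := ascent_of_reduced hR hred
      rw [wordProd_concat]
      rcases List.sublist_append_iff.1 hl' with ⟨l₁, l₂, rfl, h₁, h₂⟩
      rcases List.sublist_singleton.1 h₂ with rfl | rfl
      · rw [List.append_nil]
        exact (ih hredt l₁ h₁).snoc (R.α j) (hR.simple_pos j) hasc (S_mem_weyl' j)
      · rw [wordProd_concat]
        by_cases hv : R.wordProd l₁ (R.α j) ∈ R.pos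
        · exact chain_mul_S hR (ih hredt l₁ h₁) j
            (weylGroup_le_Gsub hR (wordProd_mem l₁)) hasc
        · obtain ⟨m', hsub, _, hprod⟩ := se_right hR (hR.simple_pos j) l₁ hv
          have hchain := (ih hredt m' (hsub.trans h₁)).snoc (R.α j) (hR.simple_pos j)
            hasc (S_mem_weyl' j)
          rw [hprod] at hchain
          exact hchain
lemma dualAct_apply (u : R.Aut) (f : Module.Dual ℚ R.V) (y : R.V) :
    R.dualAct u f y = f (u.symm y) := rfl

lemma dualAct_mul (g h : R.Aut) (f : Module.Dual ℚ R.V) :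
    R.dualAct (g * h) f = R.dualAct g (R.dualAct h f) := by
  ext y; rfl

lemma dualAct_one (f : Module.Dual ℚ R.V) : R.dualAct 1 f = f := by
  ext y; rfl

lemma dualAct_inv {b : R.Aut} {δ : Module.Dual ℚ R.V} (h : R.dualAct b δ = δ) :
    R.dualAct b⁻¹ δ = δ := by
  conv_lhs => rw [← h]
  rw [← dualAct_mul, inv_mul_cancel, dualAct_one]

lemma stab_inv {a : R.Aut} {lam : R.V} (h : a lam = lam) : a⁻¹ lam = lam := by
  have h2 : a⁻¹ (a lam) = lam := by rw [← mul_apply, inv_mul_cancel, one_apply]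
  rwa [h] at h2

/-- Monotonicity of the pairing along positive chains, with equality analysis. -/
lemma chain_F (hR : R.IsRootSystem) {lam : R.V} (hdom : R.Dominant lam)
    {δ : Module.Dual ℚ R.V} (hδ : ∀ i : Fin R.r, 0 ≤ δ (R.α i))
    {x z : R.Aut} (h : Chain R x z) (hx : x ∈ R.weylGroup) :
    δ (z⁻¹ lam) ≤ δ (x⁻¹ lam) ∧
      (δ (z⁻¹ lam) = δ (x⁻¹ lam) →
        ∃ a b : R.Aut, a ∈ R.weylGroup ∧ a lam = lam ∧ b ∈ R.weylGroup ∧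
          R.dualAct b δ = δ ∧ z = a * x * b) := by
  induction h with
  | refl x =>
      refine ⟨le_refl _, fun _ => ⟨1, 1, one_mem _, one_apply lam, one_mem _,
        dualAct_one δ, by group⟩⟩
  | cons β hβ hxβ hW h ih =>
      rename_i x z'
      have hβΦ := pos_mem_Phi hR hβ
      have hxβΦ := pos_mem_Phi hR hxβ
      have hxG : x ∈ R.Gsub := weylGroup_le_Gsub hR hx
      have hxs : x * R.s β ∈ R.weylGroup := mul_mem hx hW
      obtain ⟨ih1, ih2⟩ := ih hxs
      have hstep : δ ((x * R.s β)⁻¹ lam) = δ (x⁻¹ lam) - R.coroot (x β) lam * δ β := by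
        rw [mul_inv_rev, s_inv hR hβΦ, mul_apply, s_apply hR hβΦ, map_sub, map_smul,
          smul_eq_mul, coroot_conj hR hxG hβΦ lam]
      have hc : 0 ≤ R.coroot (x β) lam := coroot_pos_nonneg hR hdom hxβ
      have hd : 0 ≤ δ β := delta_nonneg hR hδ hβ
      have hcd : 0 ≤ R.coroot (x β) lam * δ β := mul_nonneg hc hd
      constructor
      · linarith [ih1, hstep]
      · intro hEq
        have hzero : R.coroot (x β) lam * δ β = 0 := by linarith [ih1, hstep]
        have hEq2 : δ (z'⁻¹ lam) = δ ((x * R.s β)⁻¹ lam) := by linarith [ih1, hstep]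
        obtain ⟨a, b, haW, halam, hbW, hbδ, hzab⟩ := ih2 hEq2
        rcases mul_eq_zero.1 hzero with hc0 | hd0
        · -- the reflection s_{xβ} fixes lam
          have hconj : R.s (x β) = x * R.s β * x⁻¹ := s_conj hR hxG hβΦ
          have hsW : R.s (x β) ∈ R.weylGroup :=
            hconj ▸ mul_mem (mul_mem hx hW) (inv_mem hx)
          have hfix : R.s (x β) lam = lam := by
            rw [s_apply hR hxβΦ, hc0, zero_smul, sub_zero]
          refine ⟨a * R.s (x β), b, mul_mem haW hsW, ?_, hbW, hbδ, ?_⟩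
          · rw [mul_apply, hfix, halam]
          · rw [hzab, hconj]
            group
        · -- the reflection s_β fixes δ
          have hdual : R.dualAct (R.s β) δ = δ := by
            ext y
            rw [dualAct_apply, s_symm hR hβΦ, s_apply hR hβΦ, map_sub, map_smul,
              smul_eq_mul, hd0, mul_zero, sub_zero]
          refine ⟨a, R.s β * b, haW, halam, mul_mem hW hbW, ?_, ?_⟩
          · rw [dualAct_mul, hbδ, hdual]
          · rw [hzab]; group
end RootData

open RootData

theorem statement12 (R : RootData) (hR : R.IsRootSystem)
    (lam : R.V) (hdom : R.Dominant lam)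
    (δ : Module.Dual ℚ R.V) (hδ : ∀ i : Fin R.r, 0 ≤ δ (R.α i))
    (u v : R.Aut) (hu : u ∈ R.weylGroup) (hv : v ∈ R.weylGroup)
    (hle : R.BruhatLE v u)
    (heq : R.dualAct u δ lam = R.dualAct v δ lam) :
    {g : R.Aut | ∃ a b : R.Aut, a ∈ R.weylGroup ∧ a lam = lam ∧
        b ∈ R.weylGroup ∧ R.dualAct b δ = δ ∧ g = a * u * b} =
      {g : R.Aut | ∃ a b : R.Aut, a ∈ R.weylGroup ∧ a lam = lam ∧
        b ∈ R.weylGroup ∧ R.dualAct b δ = δ ∧ g = a * v * b} := by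
  classical
  obtain ⟨l, hlred, hlprod, l', hsub, hl'prod⟩ := hle
  have hchain : Chain R v u := by
    have := chain_of_sublist hR l hlred l' hsub
    rwa [hlprod, hl'prod] at this
  have hFeq : δ (u⁻¹ lam) = δ (v⁻¹ lam) := heq
  obtain ⟨a, b, haW, halam, hbW, hbδ, huavb⟩ :=
    (chain_F hR hdom hδ hchain hv).2 hFeq
  ext g
  simp only [Set.mem_setOf_eq]
  constructor
  · rintro ⟨a₁, b₁, ha₁, ha₁lam, hb₁, hb₁δ, rfl⟩
    refine ⟨a₁ * a, b * b₁, mul_mem ha₁ haW, ?_, mul_mem hbW hb₁, ?_, ?_⟩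
    · rw [mul_apply, halam, ha₁lam]
    · rw [dualAct_mul, hb₁δ, hbδ]
    · rw [huavb]; group
  · rintro ⟨a₂, b₂, ha₂, ha₂lam, hb₂, hb₂δ, rfl⟩
    have hvinv : v = a⁻¹ * u * b⁻¹ := by rw [huavb]; group
    refine ⟨a₂ * a⁻¹, b⁻¹ * b₂, mul_mem ha₂ (inv_mem haW), ?_, mul_mem (inv_mem hbW) hb₂, ?_, ?_⟩
    · rw [mul_apply, stab_inv halam, ha₂lam]
    · rw [dualAct_mul, hb₂δ, dualAct_inv hbδ]
    · rw [hvinv]; group
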